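/- Let n, m ≥ 1 and let E ⊆ {1, …, n} × {1, …, m} be a bipartite edge set, and consider the binary alphabet {0, 1} and the finite language L = { 0^i · 1 · 1 · 0^j : (i, j) ∈ E }. If E admits a biclique cover of size k, then there exists a nondeterministic finite automaton M over {0, 1} with a finite state type of cardinality at most 2 + n + m + k whose SSB(1)-language is exactly L. -/

import Mathlib

/-- `RunFrom M q w ps` means: starting in state `q`, the list of states `ps` is a run of
`M` on the word `w` ending in an accepting state. -/
def RunFrom {α σ : Type*} (M : NFA α σ) : σ → List α → List σ → Prop
  | q, [], [] => q ∈ M.accept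
  | q, a :: w, p :: ps => p ∈ M.step q a ∧ RunFrom M p w ps
  | _, _ :: _, [] => False
  | _, [], _ :: _ => False

/-- `ps` is an accepting run of `M` on the word `w`. -/
def IsAcceptingRun {α σ : Type*} (M : NFA α σ) (w : List α) (ps : List σ) : Prop :=
  ∃ p rest, ps = p :: rest ∧ p ∈ M.start ∧ RunFrom M p w rest

/-- The SSB(1)-language of `M`: words having an accepting run with pairwise
distinct states. -/
def SSB1Lang {α σ : Type*} (M : NFA α σ) : Language α :=
  {w | ∃ ps, IsAcceptingRun M w ps ∧ ps.Nodup}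

/-- A biclique cover of size `k` of a bipartite edge set `E ⊆ V₁ × V₂`. -/
def BicliqueCover {V₁ V₂ : Type*} (E : Set (V₁ × V₂)) (k : ℕ) : Prop :=
  ∃ (A : Fin k → Set V₁) (B : Fin k → Set V₂),
    (∀ r, A r ×ˢ B r ⊆ E) ∧ ∀ e ∈ E, ∃ r, e ∈ A r ×ˢ B r

/-- The word `0^i · 1 · 1 · 0^j` over the binary alphabet (0 = `false`, 1 = `true`). -/
def zioz (i j : ℕ) : List Bool :=
  List.replicate i false ++ [true, true] ++ List.replicate j false

inductive St (n m k : ℕ) where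
  | S | L (t : Fin n) | C (r : Fin k) | R (j : Fin m) | F
  deriving DecidableEq

def stEquiv (n m k : ℕ) : St n m k ≃ (Unit ⊕ Fin n ⊕ Fin k ⊕ Fin m ⊕ Unit) where
  toFun := fun
    | .S => .inl ()
    | .L t => .inr (.inl t)
    | .C r => .inr (.inr (.inl r))
    | .R j => .inr (.inr (.inr (.inl j)))
    | .F => .inr (.inr (.inr (.inr ())))
  invFun := fun
    | .inl _ => .S
    | .inr (.inl t) => .L t
    | .inr (.inr (.inl r)) => .C r
    | .inr (.inr (.inr (.inl j))) => .R j
    | .inr (.inr (.inr (.inr _))) => .F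
  left_inv := by rintro (_ | _ | _ | _ | _) <;> rfl
  right_inv := by rintro (_ | _ | _ | _ | _) <;> rfl

noncomputable instance (n m k : ℕ) : Fintype (St n m k) := Fintype.ofEquiv _ (stEquiv n m k).symm

def mapNFA {α σ τ : Type*} (e : σ ≃ τ) (M : NFA α σ) : NFA α τ :=
  ⟨fun q a => e '' M.step (e.symm q) a, e '' M.start, e '' M.accept⟩

theorem runFrom_map {α σ τ : Type*} (e : σ ≃ τ) (M : NFA α σ) :
    ∀ (w : List α) (q : σ) (ps : List σ),
      RunFrom (mapNFA e M) (e q) w (ps.map e) ↔ RunFrom M q w ps := by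
  intro w
  induction w with
  | nil => rintro q (_ | ⟨p, ps⟩) <;>
      simp [RunFrom, mapNFA, Set.mem_image, e.injective.eq_iff]
  | cons a w ih =>
      rintro q (_ | ⟨p, ps⟩)
      · simp [RunFrom]
      · simp only [List.map_cons, RunFrom, ih]
        constructor
        · rintro ⟨h1, h2⟩
          refine ⟨?_, h2⟩
          simpa [mapNFA, Set.mem_image, e.injective.eq_iff] using h1
        · rintro ⟨h1, h2⟩
          exact ⟨⟨p, by simpa using h1, rfl⟩, h2⟩

theorem ssb1_map {α σ τ : Type*} (e : σ ≃ τ) (M : NFA α σ) :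
    SSB1Lang (mapNFA e M) = SSB1Lang M := by
  ext w
  constructor
  · rintro ⟨ps, ⟨p, rest, hps, hstart, hrun⟩, hnd⟩
    refine ⟨ps.map e.symm, ⟨e.symm p, rest.map e.symm, by simp [hps], ?_, ?_⟩, ?_⟩
    · obtain ⟨q, hq, rfl⟩ := hstart; simpa using hq
    · have := (runFrom_map e M w (e.symm p) (rest.map e.symm)).mp
      apply this
      have : rest = (rest.map e.symm).map e := by simp
      rw [e.apply_symm_apply, ← this]; exact hrun
    · exact hnd.map e.symm.injective
  · rintro ⟨ps, ⟨p, rest, hps, hstart, hrun⟩, hnd⟩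
    refine ⟨ps.map e, ⟨e p, rest.map e, by simp [hps], ⟨p, hstart, rfl⟩,
      (runFrom_map e M w p rest).mpr hrun⟩, hnd.map e.injective⟩
section Construction

variable {n m k : ℕ} (A B : Fin k → Set ℕ)

def stp : St n m k → Bool → Set (St n m k)
  | .S, false => {q | ∃ t : Fin n, t.val = 0 ∧ q = .L t}
  | .L t, false => {q | ∃ t' : Fin n, t'.val = t.val + 1 ∧ q = .L t'}
  | .L t, true => {q | ∃ r : Fin k, (t.val + 1) ∈ A r ∧ q = .C r}
  | .C r, true => {q | ∃ j : Fin m, (j.val + 1) ∈ B r ∧ q = .R j}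
  | .R j, false => {q | (j.val = 0 ∧ q = .F) ∨ ∃ j' : Fin m, j'.val + 1 = j.val ∧ q = .R j'}
  | _, _ => ∅

def myNFA : NFA Bool (St n m k) := ⟨stp A B, {.S}, {.F}⟩

-- decomposition lemmas
theorem runF_inv {w : List Bool} {ps : List (St n m k)} (h : RunFrom (myNFA A B) .F w ps) :
    w = [] := by
  cases w with
  | nil => rfl
  | cons a w =>
      cases ps with
      | nil => exact absurd h id
      | cons p ps =>
          obtain ⟨h1, -⟩ := h
          cases a <;> exact absurd h1 (by simp [myNFA, stp])

theorem runR_inv : ∀ (w : List Bool) (ps : List (St n m k)) (j : Fin m),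
    RunFrom (myNFA A B) (.R j) w ps → w = List.replicate (j.val + 1) false := by
  intro w
  induction w with
  | nil =>
      intro ps j h
      cases ps with
      | nil => simp [RunFrom, myNFA] at h
      | cons p ps => exact absurd h id
  | cons a w ih =>
      intro ps j h
      cases ps with
      | nil => exact absurd h id
      | cons p ps =>
          obtain ⟨h1, h2⟩ := h
          cases a with
          | true => exact absurd h1 (by simp [myNFA, stp])
          | false =>
              rcases h1 with ⟨hj0, rfl⟩ | ⟨j', hj', rfl⟩
              · have := runF_inv A B h2
                subst this
                simp [List.replicate, hj0]
              · have := ih ps j' h2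
                subst this
                rw [← hj']
                simp [List.replicate_succ]

theorem runC_inv {w : List Bool} {ps : List (St n m k)} {r : Fin k}
    (h : RunFrom (myNFA A B) (.C r) w ps) :
    ∃ j : Fin m, (j.val + 1) ∈ B r ∧ w = true :: List.replicate (j.val + 1) false := by
  cases w with
  | nil =>
      cases ps with
      | nil => simp [RunFrom, myNFA] at h
      | cons p ps => exact absurd h id
  | cons a w =>
      cases ps with
      | nil => exact absurd h id
      | cons p ps =>
          obtain ⟨h1, h2⟩ := h
          cases a with
          | false => exact absurd h1 (by simp [myNFA, stp])
          | true =>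
              obtain ⟨j, hj, rfl⟩ := h1
              exact ⟨j, hj, by rw [runR_inv A B w ps j h2]⟩

theorem runL_inv : ∀ (w : List Bool) (ps : List (St n m k)) (t : Fin n),
    RunFrom (myNFA A B) (.L t) w ps →
    ∃ (d : ℕ) (r : Fin k) (j : Fin m), (t.val + 1 + d) ∈ A r ∧ t.val + 1 + d ≤ n ∧
      (j.val + 1) ∈ B r ∧
      w = List.replicate d false ++ true :: true :: List.replicate (j.val + 1) false := by
  intro w
  induction w with
  | nil =>
      intro ps t h
      cases ps with
      | nil => simp [RunFrom, myNFA] at h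
      | cons p ps => exact absurd h id
  | cons a w ih =>
      intro ps t h
      cases ps with
      | nil => exact absurd h id
      | cons p ps =>
          obtain ⟨h1, h2⟩ := h
          cases a with
          | true =>
              obtain ⟨r, hr, rfl⟩ := h1
              obtain ⟨j, hj, rfl⟩ := runC_inv A B h2
              exact ⟨0, r, j, by simpa using hr, by have := t.isLt; omega, hj, rfl⟩
          | false =>
              obtain ⟨t', ht', rfl⟩ := h1
              obtain ⟨d, r, j, hA, hle, hB, rfl⟩ := ih ps t' h2
              have hval : t'.val = t.val + 1 := ht'
              have heq : t.val + 1 + (d + 1) = t'.val + 1 + d := by omega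
              refine ⟨d + 1, r, j, by rw [heq]; exact hA, by omega, hB, ?_⟩
              simp [List.replicate_succ]

end Construction
section Construction2

variable {n m k : ℕ} (A B : Fin k → Set ℕ)

theorem exR : ∀ (d : ℕ) (j : Fin m), j.val = d →
    ∃ ps : List (St n m k), RunFrom (myNFA A B) (.R j) (List.replicate (d + 1) false) ps ∧
      ps.Nodup ∧ ∀ q ∈ ps, q = .F ∨ ∃ j' : Fin m, j'.val < d ∧ q = .R j' := by
  intro d
  induction d with
  | zero =>
      intro j hj
      refine ⟨[.F], ?_, by simp, by simp⟩
      simp only [List.replicate, RunFrom]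
      exact ⟨Or.inl ⟨hj, rfl⟩, rfl⟩
  | succ d ih =>
      intro j hj
      have hd : d < m := by have := j.isLt; omega
      obtain ⟨ps, hrun, hnd, hmem⟩ := ih ⟨d, hd⟩ rfl
      refine ⟨.R ⟨d, hd⟩ :: ps, ?_, ?_, ?_⟩
      · rw [List.replicate_succ]
        exact ⟨Or.inr ⟨⟨d, hd⟩, by simp [hj], rfl⟩, hrun⟩
      · rw [List.nodup_cons]
        refine ⟨fun hin => ?_, hnd⟩
        rcases hmem _ hin with h | ⟨j', hj', h⟩
        · simp at h
        · rw [St.R.injEq] at h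
          rw [← h] at hj'
          simp at hj'
      · intro q hq
        rcases List.mem_cons.mp hq with rfl | hq
        · exact Or.inr ⟨⟨d, hd⟩, by simp, rfl⟩
        · rcases hmem q hq with h | ⟨j', hj', h⟩
          · exact Or.inl h
          · exact Or.inr ⟨j', by omega, h⟩

theorem exL : ∀ (d : ℕ) (t t' : Fin n), t'.val = t.val + d →
    ∀ (w : List Bool) (ps : List (St n m k)), RunFrom (myNFA A B) (.L t') w ps →
    ∃ chain : List (St n m k),
      RunFrom (myNFA A B) (.L t) (List.replicate d false ++ w) (chain ++ ps) ∧
      chain.Nodup ∧ ∀ q ∈ chain, ∃ u : Fin n, t.val < u.val ∧ u.val ≤ t'.val ∧ q = .L u := by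
  intro d
  induction d with
  | zero =>
      intro t t' ht w ps h
      have : t' = t := Fin.ext (by omega)
      subst this
      exact ⟨[], by simpa using h, by simp, by simp⟩
  | succ d ih =>
      intro t t' ht w ps h
      have h1 : t.val + 1 < n := by have := t'.isLt; omega
      set t1 : Fin n := ⟨t.val + 1, h1⟩ with ht1
      obtain ⟨chain, hrun, hnd, hmem⟩ := ih t1 t' (by simp [ht1]; omega) w ps h
      refine ⟨.L t1 :: chain, ?_, ?_, ?_⟩
      · rw [List.replicate_succ, List.cons_append]
        exact ⟨⟨t1, rfl, rfl⟩, hrun⟩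
      · rw [List.nodup_cons]
        refine ⟨fun hin => ?_, hnd⟩
        obtain ⟨u, hu1, hu2, hq⟩ := hmem _ hin
        rw [St.L.injEq] at hq
        rw [← hq] at hu1
        simp [ht1] at hu1
      · intro q hq
        rcases List.mem_cons.mp hq with rfl | hq
        · exact ⟨t1, by simp [ht1], by simp [ht1]; omega, rfl⟩
        · obtain ⟨u, hu1, hu2, hq⟩ := hmem q hq
          exact ⟨u, by simp [ht1] at hu1; omega, hu2, hq⟩

end Construction2
theorem ssb1_myNFA {n m k : ℕ} (E : Set (ℕ × ℕ)) (hE : E ⊆ Set.Icc 1 n ×ˢ Set.Icc 1 m)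
    (A B : Fin k → Set ℕ) (hAB : ∀ r, A r ×ˢ B r ⊆ E)
    (hcov2 : ∀ e ∈ E, ∃ r, e ∈ A r ×ˢ B r) :
    SSB1Lang (myNFA A B : NFA Bool (St n m k)) = {w | ∃ i j, (i, j) ∈ E ∧ w = zioz i j} := by
  ext w
  constructor
  · rintro ⟨ps, ⟨p, rest, hps, hstart, hrun⟩, hnd⟩
    have hp : p = St.S := hstart
    subst hp
    cases w with
    | nil =>
        cases rest with
        | nil => simp [RunFrom, myNFA] at hrun
        | cons p1 rest' => exact absurd hrun id
    | cons a w' =>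
        cases rest with
        | nil => exact absurd hrun id
        | cons p1 rest' =>
            obtain ⟨h1, h2⟩ := hrun
            cases a with
            | true => exact absurd h1 (by simp [myNFA, stp])
            | false =>
                obtain ⟨t0, ht0, rfl⟩ := h1
                obtain ⟨d, r, j, hA, hle, hB, rfl⟩ := runL_inv A B w' rest' t0 h2
                refine ⟨d + 1, j.val + 1, ?_, ?_⟩
                · refine hAB r ?_
                  rw [Set.mem_prod]
                  refine ⟨?_, hB⟩
                  rw [show (d + 1 : ℕ) = t0.val + 1 + d by omega]
                  exact hA
                · simp [zioz, List.replicate_succ]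
  · rintro ⟨i, j, hij, rfl⟩
    have hmem := hE hij
    rw [Set.mem_prod] at hmem
    obtain ⟨⟨hi1, hi2⟩, hj1, hj2⟩ := hmem
    obtain ⟨r, hir, hjr⟩ := hcov2 _ hij
    have hjm : j - 1 < m := by omega
    have him : i - 1 < n := by omega
    have h0n : 0 < n := by omega
    obtain ⟨psR, hrunR, hndR, hmemR⟩ := exR (n := n) A B (j - 1) ⟨j - 1, hjm⟩ rfl
    have hrunC : RunFrom (myNFA A B) (St.C r) (true :: List.replicate (j - 1 + 1) false)
        (St.R ⟨j - 1, hjm⟩ :: psR) := by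
      refine ⟨⟨⟨j - 1, hjm⟩, ?_, rfl⟩, hrunR⟩
      show j - 1 + 1 ∈ B r
      rw [show j - 1 + 1 = j by omega]
      exact hjr
    have hrunL : RunFrom (myNFA A B) (St.L ⟨i - 1, him⟩)
        (true :: true :: List.replicate (j - 1 + 1) false)
        (St.C r :: St.R ⟨j - 1, hjm⟩ :: psR) := by
      refine ⟨⟨r, ?_, rfl⟩, hrunC⟩
      show i - 1 + 1 ∈ A r
      rw [show i - 1 + 1 = i by omega]
      exact hir
    obtain ⟨chain, hrunL0, hndc, hmemc⟩ :=
      exL A B (i - 1) ⟨0, h0n⟩ ⟨i - 1, him⟩ (by show i - 1 = 0 + (i - 1); omega) _ _ hrunL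
    have hrunS : RunFrom (myNFA A B) St.S
        (false :: (List.replicate (i - 1) false ++
          true :: true :: List.replicate (j - 1 + 1) false))
        (St.L ⟨0, h0n⟩ :: (chain ++ St.C r :: St.R ⟨j - 1, hjm⟩ :: psR)) :=
      ⟨⟨⟨0, h0n⟩, rfl, rfl⟩, hrunL0⟩
    have hw : zioz i j = false :: (List.replicate (i - 1) false ++
        true :: true :: List.replicate (j - 1 + 1) false) := by
      have h1 : List.replicate i false = false :: List.replicate (i - 1) false := by
        conv_lhs => rw [show i = (i - 1) + 1 by omega]
        rw [List.replicate_succ]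
      have h2 : j - 1 + 1 = j := by omega
      rw [zioz, h1, h2]
      simp
    have hmemc' : ∀ q ∈ chain, ∃ u : Fin n, 0 < u.val ∧ q = St.L u := by
      intro q hq
      obtain ⟨u, h1, h2, h3⟩ := hmemc q hq
      exact ⟨u, h1, h3⟩
    refine ⟨St.S :: St.L ⟨0, h0n⟩ :: (chain ++ St.C r :: St.R ⟨j - 1, hjm⟩ :: psR),
      ⟨St.S, _, rfl, rfl, ?_⟩, ?_⟩
    · rw [hw]; exact hrunS
    · have hnd3 : (St.C r :: St.R ⟨j - 1, hjm⟩ :: psR).Nodup := by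
        rw [List.nodup_cons, List.nodup_cons]
        refine ⟨?_, ?_, hndR⟩
        · intro hmem
          rcases List.mem_cons.mp hmem with h | h
          · simp at h
          · rcases hmemR _ h with h' | ⟨j', _, h'⟩ <;> simp_all
        · intro hmem
          rcases hmemR _ hmem with h' | ⟨j', hj', h'⟩
          · simp at h'
          · rw [St.R.injEq] at h'
            rw [← h'] at hj'
            simp at hj'
      have hnd2 : (chain ++ St.C r :: St.R ⟨j - 1, hjm⟩ :: psR).Nodup := by
        rw [List.nodup_append]
        refine ⟨hndc, hnd3, ?_⟩
        intro q hq q' hq' hqq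
        subst hqq
        obtain ⟨u, _, rfl⟩ := hmemc' q hq
        rcases List.mem_cons.mp hq' with h | h
        · simp at h
        rcases List.mem_cons.mp h with h | h
        · simp at h
        · rcases hmemR _ h with h' | ⟨j', _, h'⟩ <;> simp_all
      rw [List.nodup_cons, List.nodup_cons]
      refine ⟨?_, ?_, hnd2⟩
      · intro hmem
        rcases List.mem_cons.mp hmem with h | h
        · simp at h
        rcases List.mem_append.mp h with h | h
        · obtain ⟨u, _, h'⟩ := hmemc' _ h
          simp at h'
        rcases List.mem_cons.mp h with h | h
        · simp at h
        rcases List.mem_cons.mp h with h | h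
        · simp at h
        · rcases hmemR _ h with h' | ⟨j', _, h'⟩ <;> simp_all
      · intro hmem
        rcases List.mem_append.mp hmem with h | h
        · obtain ⟨u, hu, h'⟩ := hmemc' _ h
          rw [St.L.injEq] at h'
          rw [← h'] at hu
          simp at hu
        rcases List.mem_cons.mp h with h | h
        · simp at h
        rcases List.mem_cons.mp h with h | h
        · simp at h
        · rcases hmemR _ h with h' | ⟨j', _, h'⟩ <;> simp_all

/-- If `E ⊆ {1,…,n} × {1,…,m}` admits a biclique cover of size `k`, then there is an NFA
over the binary alphabet with at most `2 + n + m + k` states whose SSB(1)-language is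
exactly `L = { 0^i·1·1·0^j : (i, j) ∈ E }`. -/
theorem biclique_cover_to_binary_ssb_nfa
    (n m : ℕ) (hn : 1 ≤ n) (hm : 1 ≤ m) (E : Set (ℕ × ℕ))
    (hE : E ⊆ Set.Icc 1 n ×ˢ Set.Icc 1 m) (k : ℕ) (hcov : BicliqueCover E k) :
    ∃ s ≤ 2 + n + m + k, ∃ M : NFA Bool (Fin s),
      SSB1Lang M = {w | ∃ i j, (i, j) ∈ E ∧ w = zioz i j} := by
  obtain ⟨A, B, hAB, hcov2⟩ := hcov
  have hcard : Fintype.card (Unit ⊕ Fin n ⊕ Fin k ⊕ Fin m ⊕ Unit) = 2 + n + m + k := by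
    simp only [Fintype.card_sum, Fintype.card_unit, Fintype.card_fin]
    omega
  let e : St n m k ≃ Fin (2 + n + m + k) :=
    (stEquiv n m k).trans (Fintype.equivFinOfCardEq hcard)
  refine ⟨2 + n + m + k, le_refl _, mapNFA e (myNFA A B), ?_⟩
  rw [ssb1_map]
  exact ssb1_myNFA E hE A B hAB hcov2
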